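/- Let n ≥ 2 and let p be a probability vector on {1,…,n}. For n−1 iid draws from p, the probability that the number 2 is unchosen AND the number 1 is not chosen exactly once equals (1 − p₂)^(n−1) − (n−1)·p₁·(1 − p₁ − p₂)^(n−2). -/

import Mathlib

open Finset

lemma lupi_aux {α : Type*} [Fintype α] [DecidableEq α] (m : ℕ) (p : α → ℝ)
    (hp1 : ∑ i, p i = 1) (a0 a1 : α) (h01 : a0 ≠ a1) :
    ∑ f ∈ Finset.univ.filter
        (fun f : Fin m → α =>
          (∀ k, f k ≠ a1) ∧
          (Finset.univ.filter (fun k => f k = a0)).card ≠ 1),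
      ∏ k, p (f k) =
      (1 - p a1) ^ m - (m : ℝ) * p a0 * (1 - p a0 - p a1) ^ (m - 1) := by
  classical
  set S : Finset α := univ.erase a1 with hSdef
  set T : Finset α := S.erase a0 with hTdef
  have hS : ∑ i ∈ S, p i = 1 - p a1 := by
    rw [hSdef, Finset.sum_erase_eq_sub (mem_univ a1), hp1]
  have ha0S : a0 ∈ S := by simp [hSdef, h01]
  have ha0T : a0 ∉ T := by simp [hTdef]
  have hT : ∑ i ∈ T, p i = 1 - p a0 - p a1 := by
    rw [hTdef, Finset.sum_erase_eq_sub ha0S, hS]; ring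
  have hsub : (univ.filter (fun f : Fin m → α =>
      (∀ k, f k ≠ a1) ∧ (univ.filter fun k => f k = a0).card = 1)) ⊆
      (univ.filter (fun f : Fin m → α => ∀ k, f k ≠ a1)) := by
    intro f hf
    simp only [mem_filter] at *
    exact ⟨hf.1, hf.2.1⟩
  have hsplit : (univ.filter (fun f : Fin m → α =>
      (∀ k, f k ≠ a1) ∧ (univ.filter fun k => f k = a0).card ≠ 1)) =
      (univ.filter (fun f : Fin m → α => ∀ k, f k ≠ a1)) \
      (univ.filter (fun f : Fin m → α =>
        (∀ k, f k ≠ a1) ∧ (univ.filter fun k => f k = a0).card = 1)) := by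
    ext f
    simp only [mem_filter, mem_sdiff, mem_univ, true_and]
    tauto
  rw [hsplit, Finset.sum_sdiff_eq_sub hsub]
  have e1 : ∑ f ∈ univ.filter (fun f : Fin m → α => ∀ k, f k ≠ a1), ∏ k, p (f k)
      = (1 - p a1) ^ m := by
    have hset : univ.filter (fun f : Fin m → α => ∀ k, f k ≠ a1)
        = Fintype.piFinset (fun _ => S) := by
      ext f
      simp [Fintype.mem_piFinset, hSdef]
    rw [hset, ← Finset.prod_univ_sum]
    simp [hS]
  have e2 : ∑ f ∈ univ.filter (fun f : Fin m → α =>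
      (∀ k, f k ≠ a1) ∧ (univ.filter fun k => f k = a0).card = 1), ∏ k, p (f k)
      = (m : ℝ) * p a0 * (1 - p a0 - p a1) ^ (m - 1) := by
    have hbij : univ.filter (fun f : Fin m → α =>
        (∀ k, f k ≠ a1) ∧ (univ.filter fun k => f k = a0).card = 1)
        = univ.biUnion (fun k₀ : Fin m =>
            Fintype.piFinset (fun k => if k = k₀ then ({a0} : Finset α) else T)) := by
      ext f
      simp only [mem_filter, mem_univ, true_and, mem_biUnion, Fintype.mem_piFinset,
        Finset.card_eq_one]
      constructor
      · rintro ⟨h1, k₀, hk⟩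
        refine ⟨k₀, fun k => ?_⟩
        by_cases hkk : k = k₀
        · subst hkk
          have hmem : k ∈ ({k} : Finset (Fin m)) := mem_singleton_self k
          rw [← hk, mem_filter] at hmem
          rw [if_pos rfl, mem_singleton]
          exact hmem.2
        · have hne0 : f k ≠ a0 := by
            intro he
            have hmem : k ∈ univ.filter (fun k => f k = a0) := by simp [he]
            rw [hk, mem_singleton] at hmem
            exact hkk hmem
          rw [if_neg hkk]
          simp only [hTdef, hSdef, mem_erase, mem_univ, and_true]
          exact ⟨hne0, h1 k⟩
      · rintro ⟨k₀, hk⟩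
        have h0 : f k₀ = a0 := by
          have := hk k₀
          rwa [if_pos rfl, mem_singleton] at this
        have hne : ∀ k, k ≠ k₀ → f k ∈ T := by
          intro k hkk
          have := hk k
          rwa [if_neg hkk] at this
        constructor
        · intro k
          by_cases hkk : k = k₀
          · subst hkk; rw [h0]; exact h01
          · have := hne k hkk
            simp only [hTdef, hSdef, mem_erase, mem_univ, and_true] at this
            exact this.2
        · refine ⟨k₀, ?_⟩
          ext k
          simp only [mem_filter, mem_univ, true_and, mem_singleton]
          constructor
          · intro he
            by_contra hkk
            exact ha0T (he ▸ hne k hkk)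
          · rintro rfl; exact h0
    have hdisj : ((univ : Finset (Fin m)) : Set (Fin m)).PairwiseDisjoint
        (fun k₀ : Fin m =>
          Fintype.piFinset (fun k => if k = k₀ then ({a0} : Finset α) else T)) := by
      intro i _ j _ hij
      simp only [Function.onFun]
      rw [Finset.disjoint_left]
      intro f hfi hfj
      simp only [Fintype.mem_piFinset] at hfi hfj
      have h1 := hfi i
      have h2 := hfj i
      rw [if_pos rfl, mem_singleton] at h1
      rw [if_neg hij] at h2
      exact ha0T (h1 ▸ h2)
    rw [hbij, Finset.sum_biUnion hdisj]
    have inner : ∀ k₀ : Fin m,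
        ∑ f ∈ Fintype.piFinset (fun k => if k = k₀ then ({a0} : Finset α) else T),
          ∏ k, p (f k) = p a0 * (1 - p a0 - p a1) ^ (m - 1) := by
      intro k₀
      rw [← Finset.prod_univ_sum]
      have hterm : ∀ k : Fin m,
          (∑ i ∈ (if k = k₀ then ({a0} : Finset α) else T), p i)
          = if k = k₀ then p a0 else (1 - p a0 - p a1) := by
        intro k
        split <;> simp [hT]
      rw [Finset.prod_congr rfl (fun k _ => hterm k),
        ← Finset.mul_prod_erase univ _ (mem_univ k₀), if_pos rfl]
      congr 1
      rw [Finset.prod_congr rfl (fun k hk => if_neg (Finset.ne_of_mem_erase hk)),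
        Finset.prod_const, Finset.card_erase_of_mem (mem_univ k₀), card_univ,
        Fintype.card_fin]
    rw [Finset.sum_congr rfl (fun k₀ _ => inner k₀), Finset.sum_const, card_univ,
      Fintype.card_fin, nsmul_eq_mul]
    ring
  rw [e1, e2]

/-- For `n - 1` iid draws from the probability vector `p` on `{1,…,n}` (encoded as
`Fin n`, with value `0` representing the number 1 and value `1` representing the
number 2), the probability that the number 2 is unchosen and the number 1 is not
chosen exactly once equals `(1 - p₂)^(n-1) - (n-1)·p₁·(1 - p₁ - p₂)^(n-2)`. -/
theorem lupi_c2 (n : ℕ) (hn : 2 ≤ n) (p : Fin n → ℝ)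
    (hp0 : ∀ i, 0 ≤ p i) (hp1 : ∑ i, p i = 1) :
    ∑ f ∈ Finset.univ.filter
        (fun f : Fin (n - 1) → Fin n =>
          (∀ k, f k ≠ (⟨1, by omega⟩ : Fin n)) ∧
          (Finset.univ.filter (fun k => f k = (⟨0, by omega⟩ : Fin n))).card ≠ 1),
      ∏ k, p (f k) =
      (1 - p ⟨1, by omega⟩) ^ (n - 1) -
        (n - 1 : ℝ) * p ⟨0, by omega⟩ *
          (1 - p ⟨0, by omega⟩ - p ⟨1, by omega⟩) ^ (n - 2) := by
  have h := lupi_aux (n - 1) p hp1 (⟨0, by omega⟩ : Fin n) (⟨1, by omega⟩ : Fin n)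
    (by simp [Fin.ext_iff])
  have hc : ((n - 1 : ℕ) : ℝ) = (n : ℝ) - 1 := by
    have : (1 : ℕ) ≤ n := by omega
    push_cast [Nat.cast_sub this]
    ring
  have he : n - 1 - 1 = n - 2 := by omega
  rw [hc, he] at h
  exact h
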